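/- Given n points in the unit square [0,1]², there exists a path (a polygonal tour visiting all n points, in some order) of total length at most √(2n) + 7/4. -/

import Mathlib

set_option maxHeartbeats 1000000

private lemma few_dist_le_l1 (a b : EuclideanSpace ℝ (Fin 2)) :
    dist a b ≤ |a 0 - b 0| + |a 1 - b 1| := by
  rw [EuclideanSpace.dist_eq]
  have h2 : ∑ i : Fin 2, dist (a i) (b i) ^ 2
      = dist (a 0) (b 0) ^ 2 + dist (a 1) (b 1) ^ 2 := by
    simp [Fin.sum_univ_two]
  rw [h2, Real.dist_eq, Real.dist_eq]
  have h0 := abs_nonneg (a 0 - b 0)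
  have h1 := abs_nonneg (a 1 - b 1)
  have hsq : |a 0 - b 0| ^ 2 + |a 1 - b 1| ^ 2 ≤ (|a 0 - b 0| + |a 1 - b 1|) ^ 2 := by
    nlinarith
  calc Real.sqrt (|a 0 - b 0| ^ 2 + |a 1 - b 1| ^ 2)
      ≤ Real.sqrt ((|a 0 - b 0| + |a 1 - b 1|) ^ 2) := Real.sqrt_le_sqrt hsq
    _ = |a 0 - b 0| + |a 1 - b 1| := Real.sqrt_sq (by linarith)

private lemma few_aux (n M K ε : ℕ) (hn : 0 < n) (hM : 0 < M) (hε : ε ≤ 1)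
    (p : Fin n → EuclideanSpace ℝ (Fin 2))
    (hp : ∀ i j, p i j ∈ Set.Icc (0 : ℝ) 1)
    (kf : Fin n → ℕ) (hK : ∀ i, kf i ≤ K) (h2K : 2 * K ≤ M) :
    ∃ σ : Equiv.Perm (Fin n),
      (∑ i ∈ Finset.range n,
        if h : i + 1 < n then dist (p (σ ⟨i, by omega⟩)) (p (σ ⟨i + 1, h⟩)) else 0)
      ≤ (K : ℝ) + 2 + 2 * ∑ i, |p i 1 - (2 * (kf i : ℝ) + ε) / M| := by
  have hMR : (0 : ℝ) < M := by exact_mod_cast hM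
  obtain ⟨x, hxeq⟩ : ∃ x : Fin n → ℝ, ∀ i, x i = p i 0 := ⟨_, fun i => rfl⟩
  obtain ⟨y, hyeq⟩ : ∃ y : Fin n → ℝ, ∀ i, y i = p i 1 := ⟨_, fun i => rfl⟩
  obtain ⟨u, hueq⟩ : ∃ u : Fin n → ℝ, ∀ i, u i = if Even (kf i) then x i else 1 - x i :=
    ⟨_, fun i => rfl⟩
  obtain ⟨d, hdeq⟩ : ∃ d : Fin n → ℝ, ∀ i, d i = |y i - (2 * (kf i : ℝ) + ε) / M| :=
    ⟨_, fun i => rfl⟩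
  obtain ⟨Φ, hΦeq⟩ : ∃ Φ : Fin n → ℝ, ∀ i, Φ i = (kf i : ℝ) * (1 + 2 / M) + u i :=
    ⟨_, fun i => rfl⟩
  obtain ⟨κ, hκeq⟩ : ∃ κ : Fin n → ℝ, ∀ i, κ i = 3 * (kf i : ℝ) + u i :=
    ⟨_, fun i => rfl⟩
  refine ⟨Tuple.sort κ, ?_⟩
  set σ := Tuple.sort κ with hσdef
  have hmono : Monotone (κ ∘ σ) := Tuple.monotone_sort κ
  clear_value σ
  clear hσdef
  have hx0 : ∀ i, 0 ≤ x i := fun i => (hxeq i) ▸ (hp i 0).1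
  have hx1 : ∀ i, x i ≤ 1 := fun i => (hxeq i) ▸ (hp i 0).2
  have hu0 : ∀ i, 0 ≤ u i := by
    intro i; rw [hueq i]; split <;> [exact hx0 i; linarith [hx1 i]]
  have hu1 : ∀ i, u i ≤ 1 := by
    intro i; rw [hueq i]; split <;> [exact hx1 i; linarith [hx0 i]]
  have hd0 : ∀ i, 0 ≤ d i := fun i => (hdeq i) ▸ abs_nonneg _
  -- per-edge bound
  have edge : ∀ a b : Fin n, κ a ≤ κ b →
      dist (p a) (p b) ≤ (Φ b - Φ a) + d a + d b := by
    intro a b hab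
    rw [hκeq a, hκeq b] at hab
    have hk : kf a ≤ kf b := by
      by_contra hc
      push_neg at hc
      have hcc : (kf b : ℝ) + 1 ≤ (kf a : ℝ) := by exact_mod_cast hc
      have := hu0 a; have := hu1 b
      linarith [hab]
    have hdist := few_dist_le_l1 (p a) (p b)
    have hxy : |x a - x b| + |y a - y b| ≤ (Φ b - Φ a) + d a + d b := by
      rw [hdeq a, hdeq b, hΦeq a, hΦeq b]
      rcases eq_or_lt_of_le hk with heq | hlt
      · -- same line
        have hu' : u a ≤ u b := by
          have hcc : (kf a : ℝ) = kf b := by exact_mod_cast heq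
          linarith [hab]
        have hxx : |x a - x b| ≤ u b - u a := by
          by_cases he : Even (kf a)
          · have heb : Even (kf b) := heq ▸ he
            have hub : u b = x b := by rw [hueq b, if_pos heb]
            have hua : u a = x a := by rw [hueq a, if_pos he]
            rw [abs_sub_le_iff]; constructor <;> linarith
          · have heb : ¬ Even (kf b) := heq ▸ he
            have hub : u b = 1 - x b := by rw [hueq b, if_neg heb]
            have hua : u a = 1 - x a := by rw [hueq a, if_neg he]
            rw [abs_sub_le_iff]; constructor <;> linarith
        have hyy : |y a - y b|
            ≤ |y a - (2 * (kf a : ℝ) + ε) / M| + |y b - (2 * (kf b : ℝ) + ε) / M| := by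
          have h1 : y a - y b
              = (y a - (2 * (kf a : ℝ) + ε) / M) - (y b - (2 * (kf b : ℝ) + ε) / M) := by
            rw [heq]; ring
          rw [h1]
          exact abs_sub _ _
        have hcc : (kf a : ℝ) = kf b := by exact_mod_cast heq
        have hΦ : (kf b : ℝ) * (1 + 2 / M) + u b - ((kf a : ℝ) * (1 + 2 / M) + u a)
            = u b - u a := by rw [hcc]; ring
        linarith
      · -- different lines
        have hlt' : (kf a : ℝ) + 1 ≤ (kf b : ℝ) := by exact_mod_cast hlt
        have hkk : (kf a : ℝ) ≤ kf b := by exact_mod_cast hk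
        have hyy : |y a - y b| ≤ |y a - (2 * (kf a : ℝ) + ε) / M|
            + |y b - (2 * (kf b : ℝ) + ε) / M| + 2 * ((kf b : ℝ) - kf a) / M := by
          have t1 : |y a - y b| ≤ |y a - (2 * (kf b : ℝ) + ε) / M| + |(2 * (kf b : ℝ) + ε) / M - y b| :=
            abs_sub_le _ _ _
          have t2 : |y a - (2 * (kf b : ℝ) + ε) / M|
              ≤ |y a - (2 * (kf a : ℝ) + ε) / M| + |(2 * (kf a : ℝ) + ε) / M - (2 * (kf b : ℝ) + ε) / M| :=
            abs_sub_le _ _ _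
          have t3 : |(2 * (kf a : ℝ) + ε) / M - (2 * (kf b : ℝ) + ε) / M|
              = 2 * ((kf b : ℝ) - kf a) / M := by
            rw [abs_of_nonpos]
            · field_simp; ring
            · rw [div_sub_div_same]
              apply div_nonpos_of_nonpos_of_nonneg
              · linarith
              · linarith
          have t4 : |(2 * (kf b : ℝ) + ε) / M - y b| = |y b - (2 * (kf b : ℝ) + ε) / M| :=
            abs_sub_comm _ _
          rw [← t4, ← t3]
          linarith
        have hxx : |x a - x b| ≤ ((kf b : ℝ) - kf a) + (u b - u a) := by
          rcases lt_or_ge (kf a + 1) (kf b) with h2 | h2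
          · -- gap ≥ 2
            have hgap : kf a + 2 ≤ kf b := h2
            have hgap' : (kf a : ℝ) + 2 ≤ (kf b : ℝ) := by exact_mod_cast hgap
            have hb0 := hu0 b; have ha1 := hu1 a
            rw [abs_sub_le_iff]
            constructor <;> linarith [hx0 a, hx1 a, hx0 b, hx1 b]
          · -- adjacent
            have hadj : kf b = kf a + 1 := by omega
            have hcast : (kf b : ℝ) = (kf a : ℝ) + 1 := by exact_mod_cast hadj
            by_cases he : Even (kf a)
            · have hob : ¬ Even (kf b) := by
                rw [hadj, Nat.even_add_one]; simpa using he
              have hua : u a = x a := by rw [hueq a, if_pos he]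
              have hub : u b = 1 - x b := by rw [hueq b, if_neg hob]
              rw [abs_sub_le_iff, hcast, hua, hub]
              constructor <;> linarith [hx0 a, hx1 a, hx0 b, hx1 b]
            · have hob : Even (kf b) := by
                rw [hadj, Nat.even_add_one]; simpa using he
              have hua : u a = 1 - x a := by rw [hueq a, if_neg he]
              have hub : u b = x b := by rw [hueq b, if_pos hob]
              rw [abs_sub_le_iff, hcast, hua, hub]
              constructor <;> linarith [hx0 a, hx1 a, hx0 b, hx1 b]
        have hΦ' : (kf b : ℝ) * (1 + 2 / M) + u b - ((kf a : ℝ) * (1 + 2 / M) + u a)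
            = ((kf b : ℝ) - kf a) + 2 * ((kf b : ℝ) - kf a) / M + (u b - u a) := by
          ring
        linarith [hyy, hxx, hΦ']
    calc dist (p a) (p b) ≤ |p a 0 - p b 0| + |p a 1 - p b 1| := hdist
      _ = |x a - x b| + |y a - y b| := by rw [hxeq a, hxeq b, hyeq a, hyeq b]
      _ ≤ _ := hxy
  -- telescoping setup
  have hn1 : n - 1 < n := by omega
  obtain ⟨F, hFeq⟩ : ∃ F : ℕ → ℝ, ∀ j, F j = Φ (σ ⟨min j (n - 1), by omega⟩) :=
    ⟨_, fun j => rfl⟩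
  obtain ⟨G, hGeq⟩ : ∃ G : ℕ → ℝ, ∀ j, G j = if h : j < n then d (σ ⟨j, h⟩) else 0 :=
    ⟨_, fun j => rfl⟩
  have hG0 : ∀ j, 0 ≤ G j := by
    intro j; rw [hGeq j]; split
    · exact hd0 _
    · exact le_refl 0
  have hstep : ∀ i ∈ Finset.range n,
      (if h : i + 1 < n then dist (p (σ ⟨i, by omega⟩)) (p (σ ⟨i + 1, h⟩)) else 0)
        ≤ (F (i + 1) - F i) + (G i + G (i + 1)) := by
    intro i hi
    rw [Finset.mem_range] at hi
    by_cases h : i + 1 < n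
    · rw [dif_pos h]
      have hFi : F i = Φ (σ ⟨i, by omega⟩) := by
        have hfin : (⟨min i (n - 1), by omega⟩ : Fin n) = ⟨i, by omega⟩ :=
          Fin.ext (by simp only [Fin.val_mk]; omega)
        rw [hFeq i, hfin]
      have hFi1 : F (i + 1) = Φ (σ ⟨i + 1, h⟩) := by
        have hfin : (⟨min (i + 1) (n - 1), by omega⟩ : Fin n) = ⟨i + 1, h⟩ :=
          Fin.ext (by simp only [Fin.val_mk]; omega)
        rw [hFeq (i + 1), hfin]
      have hGi : G i = d (σ ⟨i, by omega⟩) := by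
        rw [hGeq i, dif_pos hi]
      have hGi1 : G (i + 1) = d (σ ⟨i + 1, h⟩) := by
        rw [hGeq (i + 1), dif_pos h]
      have hle : κ (σ ⟨i, by omega⟩) ≤ κ (σ ⟨i + 1, h⟩) := by
        have hle' : (⟨i, by omega⟩ : Fin n) ≤ ⟨i + 1, h⟩ := by
          simp [Fin.le_def]
        exact hmono hle'
      have := edge (σ ⟨i, by omega⟩) (σ ⟨i + 1, h⟩) hle
      rw [hFi, hFi1, hGi, hGi1]
      linarith
    · rw [dif_neg h]
      have hFeq' : F (i + 1) = F i := by
        have hfin : (⟨min (i + 1) (n - 1), by omega⟩ : Fin n) = ⟨min i (n - 1), by omega⟩ :=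
          Fin.ext (by simp only [Fin.val_mk]; omega)
        rw [hFeq (i + 1), hFeq i, hfin]
      rw [hFeq']
      have := hG0 i; have := hG0 (i + 1)
      linarith
  have hsum : (∑ i ∈ Finset.range n,
        if h : i + 1 < n then dist (p (σ ⟨i, by omega⟩)) (p (σ ⟨i + 1, h⟩)) else 0)
      ≤ ∑ i ∈ Finset.range n, ((F (i + 1) - F i) + (G i + G (i + 1))) :=
    Finset.sum_le_sum hstep
  have htel : ∑ i ∈ Finset.range n, (F (i + 1) - F i) = F n - F 0 :=
    Finset.sum_range_sub F n
  have hGsum : ∑ i ∈ Finset.range n, G i = ∑ i, d i := by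
    rw [Finset.sum_range (fun j => G j)]
    have hGd : ∀ i : Fin n, G (i : ℕ) = d (σ i) := by
      intro i
      rw [hGeq (i : ℕ), dif_pos i.isLt]
    rw [Finset.sum_congr rfl fun i _ => hGd i]
    exact Equiv.sum_comp σ d
  have hGsum1 : ∑ i ∈ Finset.range n, G (i + 1) ≤ ∑ i, d i := by
    have h1 : ∑ i ∈ Finset.range (n + 1), G i
        = (∑ i ∈ Finset.range n, G (i + 1)) + G 0 := Finset.sum_range_succ' G n
    have h2 : ∑ i ∈ Finset.range (n + 1), G i
        = (∑ i ∈ Finset.range n, G i) + G n := Finset.sum_range_succ G n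
    have hGn : G n = 0 := by rw [hGeq n, dif_neg (by omega)]
    have := hG0 0
    rw [← hGsum]
    linarith
  have hΦub : ∀ i, Φ i ≤ (K : ℝ) * (1 + 2 / M) + 1 := by
    intro i
    have h1 : (kf i : ℝ) ≤ K := by exact_mod_cast hK i
    have h2 : (0:ℝ) ≤ 1 + 2 / M := by positivity
    have h3 := hu1 i
    have h5 : (kf i : ℝ) * (1 + 2 / M) ≤ (K : ℝ) * (1 + 2 / M) :=
      mul_le_mul_of_nonneg_right h1 h2
    rw [hΦeq i]
    linarith
  have hΦlb : ∀ i, 0 ≤ Φ i := by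
    intro i
    have h2 : (0:ℝ) ≤ 1 + 2 / M := by positivity
    have h1 : (0:ℝ) ≤ (kf i : ℝ) := Nat.cast_nonneg _
    have h3 := hu0 i
    have h5 : 0 ≤ (kf i : ℝ) * (1 + 2 / M) := mul_nonneg h1 h2
    rw [hΦeq i]
    linarith
  have hK2 : (K : ℝ) * (2 / M) ≤ 1 := by
    rw [mul_div_assoc', div_le_one hMR]
    exact_mod_cast (by omega : K * 2 ≤ M)
  have hFrange : F n - F 0 ≤ (K : ℝ) + 2 := by
    have h1 := hΦub (σ ⟨min n (n - 1), by omega⟩)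
    have h2 := hΦlb (σ ⟨min 0 (n - 1), by omega⟩)
    have e1 : F n = Φ (σ ⟨min n (n - 1), by omega⟩) := hFeq n
    have e2 : F 0 = Φ (σ ⟨min 0 (n - 1), by omega⟩) := hFeq 0
    have hexp : (K : ℝ) * (1 + 2 / M) = K + K * (2 / M) := by ring
    rw [e1, e2]
    linarith
  calc (∑ i ∈ Finset.range n,
        if h : i + 1 < n then dist (p (σ ⟨i, by omega⟩)) (p (σ ⟨i + 1, h⟩)) else 0)
      ≤ ∑ i ∈ Finset.range n, ((F (i + 1) - F i) + (G i + G (i + 1))) := hsum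
    _ = (F n - F 0) + ((∑ i ∈ Finset.range n, G i) + ∑ i ∈ Finset.range n, G (i + 1)) := by
        rw [← htel, ← Finset.sum_add_distrib, ← Finset.sum_add_distrib]
    _ ≤ ((K : ℝ) + 2) + ((∑ i, d i) + ∑ i, d i) := by
        linarith [hFrange, hGsum1, hGsum.le, hGsum.ge]
    _ = (K : ℝ) + 2 + 2 * ∑ i, |p i 1 - (2 * (kf i : ℝ) + ε) / M| := by
        have hdd : (∑ i, d i) = ∑ i, |p i 1 - (2 * (kf i : ℝ) + ε) / M| :=
          Finset.sum_congr rfl fun i _ => by rw [hdeq i, hyeq i]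
        rw [hdd]; ring

/-- Few's theorem: given `n` points in the unit square `[0,1]²`, there is an
ordering of the points such that the polygonal path through them in this order
has total length at most `√(2n) + 7/4`. -/
theorem few_path_in_unit_square (n : ℕ) (p : Fin n → EuclideanSpace ℝ (Fin 2))
    (hp : ∀ i j, p i j ∈ Set.Icc (0 : ℝ) 1) :
    ∃ σ : Equiv.Perm (Fin n),
      (∑ i ∈ Finset.range n,
        if h : i + 1 < n then dist (p (σ ⟨i, by omega⟩)) (p (σ ⟨i + 1, h⟩)) else 0)
      ≤ Real.sqrt (2 * n) + 7 / 4 := by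
  rcases Nat.eq_zero_or_pos n with hn | hn
  · subst hn
    refine ⟨1, ?_⟩
    rw [Finset.range_zero, Finset.sum_empty]
    positivity
  -- setup
  set X : ℝ := Real.sqrt (2 * n) with hXdef
  have hX0 : 0 ≤ X := Real.sqrt_nonneg _
  have hX1 : 1 ≤ X := by
    rw [hXdef, show (1:ℝ) = Real.sqrt 1 by simp]
    apply Real.sqrt_le_sqrt
    have : (1:ℝ) ≤ (n:ℝ) := by exact_mod_cast hn
    linarith
  have hX2 : X ^ 2 = 2 * n := Real.sq_sqrt (by positivity)
  set M : ℕ := ⌊X + 1/2⌋₊ with hMdef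
  have hM1 : 1 ≤ M := by
    apply Nat.le_floor
    push_cast
    linarith
  have hMpos : 0 < M := hM1
  have hMR : (0:ℝ) < M := by exact_mod_cast hMpos
  have hMle : (M : ℝ) ≤ X + 1/2 := Nat.floor_le (by linarith)
  have hMge : X - 1/2 ≤ (M : ℝ) := by
    have := Nat.lt_floor_add_one (X + 1/2)
    push_cast at this ⊢
    linarith
  -- coordinates
  have hy0 : ∀ i, 0 ≤ p i 1 := fun i => (hp i 1).1
  have hy1 : ∀ i, p i 1 ≤ 1 := fun i => (hp i 1).2
  set jf : Fin n → ℕ := fun i => min ⌊p i 1 * M⌋₊ (M - 1) with hjdef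
  have hjle : ∀ i, jf i ≤ M - 1 := fun i => min_le_right _ _
  have hj1 : ∀ i, (jf i : ℝ) / M ≤ p i 1 := by
    intro i
    rw [div_le_iff₀ hMR]
    have h1 : (jf i : ℝ) ≤ (⌊p i 1 * M⌋₊ : ℝ) := by
      exact_mod_cast min_le_left ⌊p i 1 * M⌋₊ (M - 1)
    have h2 : (⌊p i 1 * M⌋₊ : ℝ) ≤ p i 1 * M :=
      Nat.floor_le (mul_nonneg (hy0 i) hMR.le)
    linarith
  have hj2 : ∀ i, p i 1 ≤ ((jf i : ℝ) + 1) / M := by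
    intro i
    rw [le_div_iff₀ hMR]
    rcases le_or_gt ⌊p i 1 * M⌋₊ (M - 1) with h | h
    · have hji : jf i = ⌊p i 1 * M⌋₊ := min_eq_left h
      have hfl := Nat.lt_floor_add_one (p i 1 * M)
      rw [hji]
      push_cast
      push_cast at hfl
      linarith
    · have hji : jf i = M - 1 := min_eq_right (le_of_lt h)
      have hcast : (jf i : ℝ) + 1 = (M : ℝ) := by
        have hq : jf i + 1 = M := by omega
        exact_mod_cast congrArg (Nat.cast (R := ℝ)) hq
      rw [hcast]
      nlinarith [hy1 i]
  -- the two families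
  set ke : Fin n → ℕ := fun i => (if jf i % 2 = 0 then jf i else jf i + 1) / 2 with hkedef
  set ko : Fin n → ℕ := fun i => (if jf i % 2 = 1 then jf i else jf i + 1) / 2 with hkodef
  set A : ℕ := M / 2 with hAdef
  set B : ℕ := (M - 1) / 2 with hBdef
  have hkeK : ∀ i, ke i ≤ A := by
    intro i
    have := hjle i
    simp only [hkedef, hAdef]
    split <;> omega
  have hkoK : ∀ i, ko i ≤ B := by
    intro i
    have := hjle i
    simp only [hkodef, hBdef]
    split <;> omega
  have h2A : 2 * A ≤ M := by omega
  have h2B : 2 * B ≤ M := by omega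
  have hAB : (A : ℝ) + B = (M : ℝ) - 1 := by
    have hab : A + B + 1 = M := by omega
    have := congrArg (Nat.cast (R := ℝ)) hab
    push_cast at this
    linarith
  -- detour sums
  have hde : ∀ i : Fin n, |p i 1 - (2 * (ke i : ℝ) + (0:ℕ)) / M| + |p i 1 - (2 * (ko i : ℝ) + (1:ℕ)) / M|
      = 1 / M := by
    intro i
    have hlow := hj1 i
    have hhigh := hj2 i
    have hlow' : (jf i : ℝ) / M ≤ p i 1 := hlow
    have hhigh' : p i 1 ≤ ((jf i : ℝ) + 1) / M := hhigh
    by_cases hpar : jf i % 2 = 0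
    · have h1 : 2 * ke i = jf i := by simp only [hkedef]; rw [if_pos hpar]; omega
      have h2 : 2 * ko i + 1 = jf i + 1 := by
        simp only [hkodef]
        rw [if_neg (by omega)]
        omega
      have hc1 : 2 * (ke i : ℝ) + (0:ℕ) = (jf i : ℝ) := by
        have hcc := congrArg (Nat.cast (R := ℝ)) h1
        push_cast at hcc; push_cast; linarith
      have hc2 : 2 * (ko i : ℝ) + (1:ℕ) = (jf i : ℝ) + 1 := by
        have hcc := congrArg (Nat.cast (R := ℝ)) h2
        push_cast at hcc; push_cast; linarith
      rw [hc1, hc2]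
      rw [abs_of_nonneg (by linarith), abs_of_nonpos (by linarith)]
      field_simp
      ring
    · have h1 : 2 * ke i = jf i + 1 := by simp only [hkedef]; rw [if_neg hpar]; omega
      have h2 : 2 * ko i + 1 = jf i := by
        simp only [hkodef]
        rw [if_pos (by omega)]
        omega
      have hc1 : 2 * (ke i : ℝ) + (0:ℕ) = (jf i : ℝ) + 1 := by
        have hcc := congrArg (Nat.cast (R := ℝ)) h1
        push_cast at hcc; push_cast; linarith
      have hc2 : 2 * (ko i : ℝ) + (1:ℕ) = (jf i : ℝ) := by
        have hcc := congrArg (Nat.cast (R := ℝ)) h2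
        push_cast at hcc; push_cast; linarith
      rw [hc1, hc2]
      rw [abs_of_nonpos (by linarith), abs_of_nonneg (by linarith)]
      field_simp
      ring
  have hdsum : (∑ i, |p i 1 - (2 * (ke i : ℝ) + (0:ℕ)) / M|)
      + (∑ i, |p i 1 - (2 * (ko i : ℝ) + (1:ℕ)) / M|) = (n : ℝ) / M := by
    rw [← Finset.sum_add_distrib]
    rw [Finset.sum_congr rfl fun i _ => hde i]
    rw [Finset.sum_const, Finset.card_univ, Fintype.card_fin, nsmul_eq_mul]
    ring
  -- apply the per-family lemma
  obtain ⟨σe, hσe⟩ := few_aux n M A 0 hn hMpos (by norm_num) p hp ke hkeK h2A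
  obtain ⟨σo, hσo⟩ := few_aux n M B 1 hn hMpos (by norm_num) p hp ko hkoK h2B
  -- final arithmetic
  have hM1R : (1:ℝ) ≤ M := by exact_mod_cast hM1
  have hfinal : (M : ℝ) / 2 + (n : ℝ) / M ≤ X + 1/4 := by
    have hsq : ((M : ℝ) - X) ^ 2 ≤ 1/4 := by nlinarith
    have e1 : (M:ℝ)/2 + (n:ℝ)/M = ((M:ℝ)*M + 2*n)/(2*M) := by field_simp
    rw [e1, div_le_iff₀ (by positivity : (0:ℝ) < 2*M)]
    nlinarith [hsq, hM1R, hX2]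
  set De : ℝ := ∑ i, |p i 1 - (2 * (ke i : ℝ) + (0:ℕ)) / M| with hDe
  set Do : ℝ := ∑ i, |p i 1 - (2 * (ko i : ℝ) + (1:ℕ)) / M| with hDo
  have hkey : ((A : ℝ) + 2 + 2 * De) + ((B : ℝ) + 2 + 2 * Do) ≤ 2 * (X + 7/4) := by
    linarith [hAB, hdsum, hfinal]
  rcases le_total ((A : ℝ) + 2 + 2 * De) ((B : ℝ) + 2 + 2 * Do) with hc | hc
  · refine ⟨σe, ?_⟩
    rw [hXdef] at hkey
    linarith [hσe]
  · refine ⟨σo, ?_⟩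
    rw [hXdef] at hkey
    linarith [hσo]
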